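/- Let L be a first-order language with no function symbols and no constant symbols (a purely relational language) and φ an L-sentence. The following are equivalent: (i) there is an L-sentence χ such that for every nonempty L-structure M, M satisfies χ if and only if M has a nonempty substructure satisfying φ; (ii) every nonempty L-structure satisfying φ has a finite nonempty substructure satisfying φ; (iii) there is a natural number n such that every nonempty L-structure satisfying φ has a nonempty substructure with at most n elements satisfying φ. -/

import Mathlib

open FirstOrder Language Structure Set

universe u

namespace ThetaAux

variable {L : FirstOrder.Language} [L.IsRelational]

/-- Any set is (the carrier of) a substructure in a relational language. -/
def setSub {M : Type*} [L.Structure M] (s : Set M) : L.Substructure M :=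
  ⟨s, fun {_} f => isEmptyElim f⟩

@[simp] theorem coe_setSub {M : Type*} [L.Structure M] (s : Set M) :
    ((setSub (L := L) s : L.Substructure M) : Set M) = s := rfl

@[simp] theorem mem_setSub {M : Type*} [L.Structure M] {s : Set M} {a : M} :
    a ∈ (setSub (L := L) s : L.Substructure M) ↔ a ∈ s := Iff.rfl

/-- The tautological map into the substructure on the range of `x`. -/
def toSub {M : Type*} [L.Structure M] {n : ℕ} (x : Fin n → M) (i : Fin n) :
    setSub (L := L) (range x) := ⟨x i, mem_range_self i⟩

@[simp] theorem coe_toSub {M : Type*} [L.Structure M] {n : ℕ} (x : Fin n → M) (i : Fin n) :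
    ((toSub (L := L) x i : setSub (L := L) (range x)) : M) = x i := rfl

/-- Relativization of a bounded formula to `n` designated free variables,
with `σ` recording how the bound variables were assigned. -/
noncomputable def relv (n : ℕ) : ∀ {m : ℕ},
    L.BoundedFormula Empty m → (Fin m → Fin n) → L.Formula (Fin n)
  | _, BoundedFormula.falsum, _ => ⊥
  | _, BoundedFormula.equal t₁ t₂, σ =>
      Term.equal (t₁.relabel (Sum.elim Empty.elim σ)) (t₂.relabel (Sum.elim Empty.elim σ))
  | _, BoundedFormula.rel R ts, σ => R.formula fun i => (ts i).relabel (Sum.elim Empty.elim σ)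
  | _, BoundedFormula.imp ψ₁ ψ₂, σ => (relv n ψ₁ σ).imp (relv n ψ₂ σ)
  | _, BoundedFormula.all ψ, σ =>
      BoundedFormula.iInf fun i : Fin n => relv n ψ (Fin.snoc σ i)

theorem term_aux {M : Type*} [L.Structure M] {m n : ℕ} (x : Fin n → M) (σ : Fin m → Fin n)
    (t : L.Term (Empty ⊕ Fin m)) :
    t.realize (x ∘ Sum.elim Empty.elim σ)
      = (((t.realize (Sum.elim (fun e : Empty => e.elim)
          (fun j => (⟨x (σ j), mem_range_self (σ j)⟩ : setSub (L := L) (range x)))) :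
            setSub (L := L) (range x))) : M) :=
  match t with
  | Term.var (Sum.inl e) => e.elim
  | Term.var (Sum.inr _) => rfl
  | Term.func f _ => isEmptyElim f

theorem realize_relv {M : Type*} [L.Structure M] {n : ℕ} (x : Fin n → M)
    {m : ℕ} (ψ : L.BoundedFormula Empty m) :
    ∀ σ : Fin m → Fin n,
      (relv n ψ σ).Realize x ↔
        ψ.Realize (fun e : Empty => e.elim) (fun j => toSub (L := L) x (σ j)) := by
  induction ψ with
  | falsum => intro σ; exact Iff.rfl
  | equal t₁ t₂ =>
    intro σ
    simp only [relv, Formula.realize_equal, Term.realize_relabel,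
      BoundedFormula.realize_bdEqual]
    rw [term_aux x σ t₁, term_aux x σ t₂, Subtype.coe_inj]
    exact Iff.rfl
  | rel R ts =>
    intro σ
    simp only [relv, Formula.realize_rel, Term.realize_relabel, BoundedFormula.realize_rel]
    exact iff_of_eq (congrArg (RelMap R) (funext fun i => term_aux x σ (ts i)))
  | imp ψ₁ ψ₂ ih₁ ih₂ =>
    intro σ
    simp only [relv, Formula.Realize, BoundedFormula.realize_imp] at *
    rw [ih₁ σ, ih₂ σ]
  | all ψ ih =>
    rename_i k
    intro σ
    have key : ∀ i : Fin n,
        (Fin.snoc (fun j => toSub (L := L) x (σ j)) (toSub (L := L) x i))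
        = fun j : Fin (k + 1) => toSub (L := L) x (Fin.snoc (α := fun _ => Fin n) σ i j) := by
      intro i
      funext j
      refine Fin.lastCases ?_ (fun k => ?_) j
      · simp only [Fin.snoc_last]
      · simp only [Fin.snoc_castSucc]
    simp only [relv, Formula.Realize, BoundedFormula.realize_iInf, Finset.mem_univ,
      true_implies, BoundedFormula.realize_all]
    constructor
    · intro h a
      obtain ⟨i, hi⟩ := a.2
      have ha : a = toSub (L := L) x i := Subtype.ext hi.symm
      subst ha
      rw [key i]
      exact (ih (Fin.snoc σ i)).1 (h i)
    · intro h i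
      refine (ih (Fin.snoc σ i)).2 ?_
      rw [← key i]
      exact h (toSub (L := L) x i)

/-- The sentence asserting that some substructure generated by `n` elements satisfies `φ`. -/
noncomputable def tau (φ : L.Sentence) (n : ℕ) : L.Sentence :=
  Formula.iExs (Fin n) ((relv n φ Fin.elim0).relabel (Sum.inr : Fin n → Empty ⊕ Fin n))

theorem realize_tau {M : Type*} [L.Structure M] {φ : L.Sentence} {n : ℕ} :
    M ⊨ tau φ n ↔ ∃ x : Fin n → M, (setSub (L := L) (range x) : Type _) ⊨ φ := by
  rw [Sentence.Realize, tau, Formula.realize_iExs]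
  refine exists_congr fun x => ?_
  have h0 : (fun a : Fin n => Sum.elim (default : Empty → M) x (Sum.inr a)) = x := rfl
  rw [Formula.realize_relabel, Sum.elim_comp_inr, realize_relv x φ Fin.elim0]
  rw [Sentence.Realize, Formula.Realize]
  have he : (fun e : Empty => e.elim : Empty → (setSub (L := L) (range x))) = default := by
    funext e; exact e.elim
  rw [he]
  constructor <;> intro h <;> convert h using 2

theorem exists_fun_range_eq {M : Type*} {s : Set M} (hfin : s.Finite) (hne : s.Nonempty)
    {n : ℕ} (hcard : s.ncard ≤ n) : ∃ x : Fin n → M, range x = s := by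
  obtain ⟨a0, ha0⟩ := hne
  haveI := hfin.fintype
  have hc : Fintype.card s = s.ncard := by
    rw [← Nat.card_coe_set_eq, Nat.card_eq_fintype_card]
  set e := Fintype.equivFin s with he
  refine ⟨fun i => if h : (i : ℕ) < Fintype.card s then (e.symm ⟨i, h⟩ : M) else a0, ?_⟩
  apply Set.eq_of_subset_of_subset
  · rintro y ⟨i, rfl⟩
    dsimp only
    split
    · exact (e.symm _).2
    · exact ha0
  · intro y hy
    have hlt : ((e ⟨y, hy⟩ : Fin (Fintype.card s)) : ℕ) < n := lt_of_lt_of_le (e ⟨y, hy⟩).2 (le_trans (le_of_eq hc) hcard)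
    refine ⟨⟨e ⟨y, hy⟩, hlt⟩, ?_⟩
    dsimp only
    rw [dif_pos ((e ⟨y, hy⟩).2)]
    simp

theorem ncard_range_le {M : Type*} {n : ℕ} (x : Fin n → M) : (range x).ncard ≤ n := by
  rw [← Set.image_univ]
  refine le_trans (Set.ncard_image_le (Set.finite_univ)) ?_
  rw [Set.ncard_univ, Nat.card_eq_fintype_card, Fintype.card_fin]

/-- Transfer of a substructure of a substructure to a substructure of the big model. -/
theorem transfer {M : Type*} [L.Structure M] {φ : L.Sentence} (S : L.Substructure M)
    (T : L.Substructure S) (hφ : (T : Type _) ⊨ φ) :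
    ∃ R : L.Substructure M, (R : Set M) = Subtype.val '' (T : Set S) ∧ (R : Type _) ⊨ φ := by
  refine ⟨(S.subtype.comp T.subtype).toHom.range, ?_, ?_⟩
  · rw [Hom.range_coe]
    change Set.range (⇑S.subtype ∘ ⇑T.subtype) = _
    rw [Set.range_comp, Substructure.coe_subtype, Substructure.coe_subtype, Subtype.range_coe]
  · exact (StrongHomClass.realize_sentence (S.subtype.comp T.subtype).equivRange φ).1 hφ

/-- If a model has a finite nonempty substructure of size at most `n` satisfying `φ`,
then it satisfies `tau φ n`. -/
theorem tau_intro {M : Type*} [L.Structure M] {φ : L.Sentence} {n : ℕ}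
    (R : L.Substructure M) (hne : (R : Set M).Nonempty) (hfin : (R : Set M).Finite)
    (hcard : (R : Set M).ncard ≤ n) (hφ : (R : Type _) ⊨ φ) : M ⊨ tau φ n := by
  obtain ⟨x, hx⟩ := exists_fun_range_eq hfin hne hcard
  rw [realize_tau]
  refine ⟨x, ?_⟩
  have hRx : (setSub (L := L) (range x) : L.Substructure M) = R :=
    SetLike.coe_injective (by rw [coe_setSub, hx])
  rw [hRx]
  exact hφ

/-- Conversely, `tau φ (n+1)` produces a finite nonempty substructure of size `≤ n+1`. -/
theorem tau_elim {M : Type*} [L.Structure M] {φ : L.Sentence} {n : ℕ}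
    (h : M ⊨ tau φ (n + 1)) :
    ∃ R : L.Substructure M, (R : Set M).Nonempty ∧ (R : Set M).Finite ∧
      (R : Set M).ncard ≤ n + 1 ∧ (R : Type _) ⊨ φ := by
  rw [realize_tau] at h
  obtain ⟨x, hx⟩ := h
  exact ⟨setSub (L := L) (range x), ⟨x 0, mem_range_self 0⟩, Set.finite_range x,
    ncard_range_le x, hx⟩

/-- From a family of counterexamples of unbounded size, an ultraproduct yields a nonempty
model of `φ` with no finite nonempty substructure satisfying `φ`. -/
theorem bigModel {φ : L.Sentence}
    (hbad : ∀ n : ℕ, ∃ (M : Type u) (_ : L.Structure M), Nonempty M ∧ M ⊨ φ ∧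
      ∀ S : L.Substructure M, (S : Set M).Nonempty → (S : Set M).Finite →
        (S : Set M).ncard ≤ n → ¬ (S : Type u) ⊨ φ) :
    ∃ (N : Type u) (_ : L.Structure N), Nonempty N ∧ N ⊨ φ ∧
      ∀ S : L.Substructure N, (S : Set N).Nonempty → (S : Set N).Finite →
        ¬ (S : Type u) ⊨ φ := by
  choose Mf If hne hphi hS using hbad
  letI : ∀ n, L.Structure (Mf n) := If
  haveI : ∀ n, Nonempty (Mf n) := hne
  set F : Ultrafilter ℕ := Filter.hyperfilter ℕ with hF
  refine ⟨(F : Filter ℕ).Product Mf, inferInstance, inferInstance, ?_, ?_⟩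
  · exact (Ultraproduct.sentence_realize φ).2 (Filter.Eventually.of_forall hphi)
  · intro S hSne hSfin hSphi
    have hk : 0 < (S : Set ((F : Filter ℕ).Product Mf)).ncard := (Set.ncard_pos hSfin).2 hSne
    have htau : ((F : Filter ℕ).Product Mf) ⊨ tau φ ((S : Set ((F : Filter ℕ).Product Mf)).ncard) :=
      tau_intro S hSne hSfin le_rfl hSphi
    have hev : ∀ᶠ n in (F : Filter ℕ), Mf n ⊨ tau φ ((S : Set ((F : Filter ℕ).Product Mf)).ncard) :=
      (Ultraproduct.sentence_realize _).1 htau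
    have hge : {n : ℕ | (S : Set ((F : Filter ℕ).Product Mf)).ncard ≤ n} ∈ (F : Filter ℕ) := by
      apply Filter.mem_hyperfilter_of_finite_compl
      have : {n : ℕ | (S : Set ((F : Filter ℕ).Product Mf)).ncard ≤ n}ᶜ ⊆ Set.Iio ((S : Set ((F : Filter ℕ).Product Mf)).ncard) := by
        intro y hy
        simpa [Set.mem_Iio, not_le] using hy
      exact (Set.finite_Iio _).subset this
    obtain ⟨m, hm1, hm2⟩ := (hev.and hge).exists
    obtain ⟨k, hkeq⟩ : ∃ k, (S : Set ((F : Filter ℕ).Product Mf)).ncard = k + 1 :=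
      ⟨(S : Set ((F : Filter ℕ).Product Mf)).ncard - 1, (Nat.succ_pred_eq_of_pos hk).symm⟩
    rw [hkeq] at hm1 hm2
    obtain ⟨R, hRne, hRfin, hRcard, hRphi⟩ := tau_elim hm1
    exact hS m R hRne hRfin (le_trans hRcard hm2) hRphi

section FinApprox

variable {N : Type*} [L.Structure N]

/-- The carrier sets of the finite approximating substructures. -/
def carr (n₀ : N) (t : Finset N) : Set N := ↑t ∪ {n₀}

theorem finite_carr (n₀ : N) (t : Finset N) : (carr n₀ t).Finite :=
  t.finite_toSet.union (Set.finite_singleton n₀)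

/-- The finite approximating substructures as types. -/
abbrev Afam (n₀ : N) (t : Finset N) : Type _ :=
  (setSub (L := L) (carr n₀ t) : L.Substructure N)

theorem mem_carr_self (n₀ : N) (t : Finset N) : n₀ ∈ carr n₀ t := Or.inr rfl

instance AfamNonempty (n₀ : N) (t : Finset N) : Nonempty (Afam (L := L) n₀ t) :=
  ⟨⟨n₀, mem_carr_self n₀ t⟩⟩

open scoped Classical in
/-- The approximating map. -/
noncomputable def gfun (n₀ : N) (s : N) (t : Finset N) : Afam (L := L) n₀ t :=
  if h : s ∈ carr n₀ t then ⟨s, h⟩ else ⟨n₀, mem_carr_self n₀ t⟩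

theorem gfun_eq {n₀ s : N} {t : Finset N} (h : s ∈ carr n₀ t) :
    ((gfun (L := L) n₀ s t : Afam (L := L) n₀ t) : N) = s := by
  rw [gfun, dif_pos h]

variable (V : Ultrafilter (Finset N))
  (hV : ∀ {k : ℕ} (v : Fin k → N) (n₀ : N), {t : Finset N | ∀ i, v i ∈ carr n₀ t} ∈ V)

/-- The embedding of `N` into the ultraproduct of its finite approximations. -/
noncomputable def jemb (n₀ : N) : N ↪[L] (V : Filter (Finset N)).Product (Afam (L := L) n₀) where
  toFun s := (↑(fun t => gfun (L := L) n₀ s t) : (V : Filter (Finset N)).Product (Afam (L := L) n₀))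
  inj' := by
    intro s s' h
    have h' : ∀ᶠ t in (V : Filter (Finset N)),
        gfun (L := L) n₀ s t = gfun (L := L) n₀ s' t := Quotient.exact' h
    have hmem := hV ![s, s'] n₀
    obtain ⟨t, ht1, ht2⟩ := (h'.and hmem).exists
    have h1 : s ∈ carr n₀ t := ht2 0
    have h2 : s' ∈ carr n₀ t := ht2 1
    calc s = ((gfun (L := L) n₀ s t : Afam (L := L) n₀ t) : N) := (gfun_eq h1).symm
    _ = ((gfun (L := L) n₀ s' t : Afam (L := L) n₀ t) : N) := by rw [ht1]
    _ = s' := gfun_eq h2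
  map_fun' := fun f => isEmptyElim f
  map_rel' := by
    intro k r v
    have hrel := relMap_quotient_mk'
      (s := Filter.productSetoid (V : Filter (Finset N)) (Afam (L := L) n₀)) r
      (fun i => fun t => gfun (L := L) n₀ (v i) t)
    refine Iff.trans (Iff.trans ?_ hrel) ?_
    · exact Iff.rfl
    · change (∀ᶠ t in (V : Filter (Finset N)),
        RelMap r fun i => gfun (L := L) n₀ (v i) t) ↔ _
      constructor
      · intro h
        obtain ⟨t, ht1, ht2⟩ := (h.and (hV v n₀)).exists
        have hfe : (fun i => ((gfun (L := L) n₀ (v i) t : Afam (L := L) n₀ t) : N)) = v :=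
          funext fun i => gfun_eq (ht2 i)
        rw [← hfe]
        exact ht1
      · intro h
        refine Filter.mem_of_superset (hV v n₀) ?_
        intro t ht
        have hfe : (fun i => ((gfun (L := L) n₀ (v i) t : Afam (L := L) n₀ t) : N)) = v :=
          funext fun i => gfun_eq (ht i)
        change RelMap r (fun i => ((gfun (L := L) n₀ (v i) t : Afam (L := L) n₀ t) : N))
        rw [hfe]
        exact h

/-- Any nonempty model of `φ` has a finite nonempty substructure satisfying `φ`, provided
`θ(φ)` is expressible by a sentence `χ` over nonempty structures of the same universe. -/
theorem finApprox {φ χ : L.Sentence} (N : Type u) [L.Structure N] [Nonempty N]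
    (hχ : ∀ (M : Type u) [L.Structure M], Nonempty M →
      (M ⊨ χ ↔ ∃ S : L.Substructure M, (S : Set M).Nonempty ∧ (S : Type u) ⊨ φ))
    (hNφ : N ⊨ φ) :
    ∃ S : L.Substructure N, (S : Set N).Nonempty ∧ (S : Set N).Finite ∧ (S : Type u) ⊨ φ := by
  obtain ⟨n₀⟩ := (inferInstance : Nonempty N)
  set V : Ultrafilter (Finset N) := Ultrafilter.of Filter.atTop with hVdef
  have hV : ∀ {k : ℕ} (v : Fin k → N) (n₀' : N),
      {t : Finset N | ∀ i, v i ∈ carr n₀' t} ∈ V := by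
    intro k v n₀'
    classical
    have h1 : {t : Finset N | Finset.image v Finset.univ ≤ t}
        ∈ (Filter.atTop : Filter (Finset N)) := Filter.mem_atTop _
    refine Filter.mem_of_superset (Ultrafilter.of_le Filter.atTop h1) ?_
    intro t ht i
    exact Or.inl (ht (Finset.mem_image_of_mem v (Finset.mem_univ i)))
  have hANE : Nonempty ((V : Filter (Finset N)).Product (Afam (L := L) n₀)) := inferInstance
  have hrange : ((jemb (L := L) V @hV n₀).toHom.range :
      Set ((V : Filter (Finset N)).Product (Afam (L := L) n₀))).Nonempty :=
    ⟨jemb (L := L) V @hV n₀ n₀, Hom.mem_range_self _ _⟩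
  have hrangeφ : ((jemb (L := L) V @hV n₀).toHom.range : Type u) ⊨ φ :=
    (StrongHomClass.realize_sentence (jemb (L := L) V @hV n₀).equivRange φ).1 hNφ
  have hAχ : ((V : Filter (Finset N)).Product (Afam (L := L) n₀)) ⊨ χ :=
    (hχ _ hANE).2 ⟨(jemb (L := L) V @hV n₀).toHom.range, hrange, hrangeφ⟩
  obtain ⟨t₀, ht₀⟩ := ((Ultraproduct.sentence_realize χ).1 hAχ).exists
  obtain ⟨T, hTne, hTφ⟩ := (hχ (Afam (L := L) n₀ t₀) inferInstance).1 ht₀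
  haveI : Finite (Afam (L := L) n₀ t₀) := (finite_carr n₀ t₀).to_subtype
  obtain ⟨R, hRcoe, hRφ⟩ := transfer (setSub (L := L) (carr n₀ t₀)) T hTφ
  refine ⟨R, ?_, ?_, hRφ⟩
  · rw [hRcoe]
    exact hTne.image _
  · rw [hRcoe]
    exact ((T : Set (Afam (L := L) n₀ t₀)).toFinite).image _

end FinApprox

end ThetaAux

/-- Corollary for predicate signatures, case κ = ω: for a purely relational
language `L` and a sentence `φ`, the following are equivalent: (i) `θ(φ)` is expressible by
a first-order sentence over nonempty structures; (ii) every nonempty model of `φ` has a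
finite nonempty substructure satisfying `φ`; (iii) there is `n : ℕ` such that every nonempty
model of `φ` has a nonempty substructure of at most `n` elements satisfying `φ`. -/
theorem theta_expressibility_tfae_relational {L : FirstOrder.Language} [L.IsRelational]
    (φ : L.Sentence) :
    List.TFAE
      [∃ χ : L.Sentence, ∀ (M : Type u) [L.Structure M], Nonempty M →
          (M ⊨ χ ↔ ∃ S : L.Substructure M, (S : Set M).Nonempty ∧ (S : Type _) ⊨ φ),
        ∀ (M : Type u) [L.Structure M], Nonempty M → M ⊨ φ →
          ∃ S : L.Substructure M, (S : Set M).Nonempty ∧ (S : Set M).Finite ∧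
            (S : Type _) ⊨ φ,
        ∃ n : ℕ, ∀ (M : Type u) [L.Structure M], Nonempty M → M ⊨ φ →
          ∃ S : L.Substructure M, (S : Set M).Nonempty ∧ (S : Set M).Finite ∧
            (S : Set M).ncard ≤ n ∧ (S : Type _) ⊨ φ] := by
  tfae_have 3 → 2 := by
    rintro ⟨n, h3⟩ M _ hne hφ
    obtain ⟨S, a, b, _, d⟩ := h3 M hne hφ
    exact ⟨S, a, b, d⟩
  tfae_have 3 → 1 := by
    rintro ⟨n, h3⟩
    refine ⟨ThetaAux.tau φ (n + 1), ?_⟩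
    intro M _ hne
    constructor
    · intro h
      obtain ⟨R, hRne, _, _, hRφ⟩ := ThetaAux.tau_elim h
      exact ⟨R, hRne, hRφ⟩
    · rintro ⟨S, hSne, hSφ⟩
      haveI : Nonempty S := hSne.to_subtype
      obtain ⟨T, hTne, hTfin, hTcard, hTφ⟩ := h3 S this hSφ
      obtain ⟨R, hRcoe, hRφ⟩ := ThetaAux.transfer S T hTφ
      refine ThetaAux.tau_intro R ?_ ?_ ?_ hRφ
      · rw [hRcoe]; exact hTne.image _
      · rw [hRcoe]; exact hTfin.image _
      · rw [hRcoe, Set.ncard_image_of_injective _ Subtype.val_injective]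
        exact hTcard.trans (n.le_succ)
  tfae_have 2 → 3 := by
    intro h2
    by_contra h3
    push_neg at h3
    obtain ⟨N, iN, hN1, hN2, hN3⟩ := ThetaAux.bigModel h3
    letI := iN
    haveI := hN1
    obtain ⟨S, a, b, c⟩ := h2 N hN1 hN2
    exact hN3 S a b c
  tfae_have 1 → 3 := by
    rintro ⟨χ, hχ⟩
    by_contra h3
    push_neg at h3
    obtain ⟨N, iN, hN1, hN2, hN3⟩ := ThetaAux.bigModel h3
    letI := iN
    haveI := hN1
    obtain ⟨S, a, b, c⟩ := ThetaAux.finApprox N hχ hN2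
    exact hN3 S a b c
  tfae_finish
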